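/- arXiv:1909.12654 — 2 statements merged into one kernel-verified Lean document; each statement's English description precedes it below -/
import Mathlib

section
/- Let E₃ : y² + a₁xy + a₃y = x³ with a₃ ≠ 0, a curve over ℚ with torsion point P = (0,0) of order 3. Then the numerator G_n of the x-coordinate of [n]P satisfies G_n = 0 if n ≡ 1, 2 (mod 3), and G_n = a₃^{2n²/3} if n ≡ 0 (mod 3). -/
open Polynomial

/-- The curve `E₃ : y² + a₁xy + a₃y = x³`. -/
def E3 (a₁ a₃ : ℚ) : WeierstrassCurve.Affine ℚ :=
  { a₁ := a₁, a₂ := 0, a₃ := a₃, a₄ := 0, a₆ := 0 }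

/-- Closed form for `preNormEDS' (a^4) 0 (-a^4)`. -/
def pp (a : ℚ) (n : ℕ) : ℚ :=
  if n % 3 = 0 then 0
  else if n % 6 = 1 then a ^ (12 * (n / 6) ^ 2 + 4 * (n / 6))
  else if n % 6 = 2 then a ^ (12 * (n / 6) ^ 2 + 8 * (n / 6))
  else if n % 6 = 4 then -a ^ (12 * (n / 6) ^ 2 + 16 * (n / 6) + 4)
  else -a ^ (12 * (n / 6) ^ 2 + 20 * (n / 6) + 8)

lemma pp_0 (a : ℚ) (n : ℕ) (h : n % 3 = 0) : pp a n = 0 := by simp [pp, h]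

lemma pp_1 (a : ℚ) (n q : ℕ) (h : n = 6*q+1) :
    pp a n = a ^ (12*q^2+4*q) := by
  subst h
  have h3 : (6*q+1) % 3 = 1 := by omega
  have h6 : (6*q+1) % 6 = 1 := by omega
  have hd : (6*q+1) / 6 = q := by omega
  simp [pp, h3, h6, hd]

lemma pp_2 (a : ℚ) (n q : ℕ) (h : n = 6*q+2) :
    pp a n = a ^ (12*q^2+8*q) := by
  subst h
  have h3 : (6*q+2) % 3 = 2 := by omega
  have h6 : (6*q+2) % 6 = 2 := by omega
  have hd : (6*q+2) / 6 = q := by omega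
  simp [pp, h3, h6, hd]

lemma pp_4 (a : ℚ) (n q : ℕ) (h : n = 6*q+4) :
    pp a n = -a ^ (12*q^2+16*q+4) := by
  subst h
  have h3 : (6*q+4) % 3 = 1 := by omega
  have h6 : (6*q+4) % 6 = 4 := by omega
  have hd : (6*q+4) / 6 = q := by omega
  simp [pp, h3, h6, hd]

lemma pp_5 (a : ℚ) (n q : ℕ) (h : n = 6*q+5) :
    pp a n = -a ^ (12*q^2+20*q+8) := by
  subst h
  have h3 : (6*q+5) % 3 = 2 := by omega
  have h6 : (6*q+5) % 6 = 5 := by omega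
  have hd : (6*q+5) / 6 = q := by omega
  simp [pp, h3, h6, hd]

lemma key (a : ℚ) (n : ℕ) : preNormEDS' (a^4) 0 (-a^4) n = pp a n := by
  induction n using Nat.strong_induction_on with
  | _ n ih =>
    match n with
    | 0 => rw [preNormEDS'_zero, pp_0 a 0 (by norm_num)]
    | 1 => rw [preNormEDS'_one, pp_1 a 1 0 rfl]; norm_num
    | 2 => rw [preNormEDS'_two, pp_2 a 2 0 rfl]; norm_num
    | 3 => rw [preNormEDS'_three, pp_0 a 3 (by norm_num)]
    | 4 => rw [preNormEDS'_four, pp_4 a 4 0 rfl]; norm_num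
    | (k+5) =>
      rcases Nat.even_or_odd (k+5) with he | ho
      · obtain ⟨M, hM⟩ : ∃ M, k + 5 = 2*(M+3) := by
          obtain ⟨t, ht⟩ := he; exact ⟨t - 3, by omega⟩
        rw [hM, preNormEDS'_even]
        rw [ih (M+1) (by omega), ih (M+2) (by omega), ih (M+3) (by omega),
            ih (M+4) (by omega), ih (M+5) (by omega)]
        obtain ⟨q, r, hr, hm⟩ : ∃ q r, r < 6 ∧ M = 6*q+r := ⟨M/6, M%6, by omega, by omega⟩
        subst hm
        interval_cases r
        · rw [pp_0 a (2*(6*q+0+3)) (by omega), pp_0 a (6*q+0+3) (by omega)]; ring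
        · rw [pp_2 a (2*(6*q+1+3)) (2*q+1) (by omega), pp_0 a (6*q+1+2) (by omega),
              pp_4 a (6*q+1+3) q (by omega), pp_2 a (6*q+1+1) q (by omega),
              pp_5 a (6*q+1+4) q (by omega)]
          ring
        · rw [pp_4 a (2*(6*q+2+3)) (2*q+1) (by omega), pp_4 a (6*q+2+2) q (by omega),
              pp_5 a (6*q+2+3) q (by omega), pp_1 a (6*q+2+5) (q+1) (by omega),
              pp_0 a (6*q+2+1) (by omega)]
          ring
        · rw [pp_0 a (2*(6*q+3+3)) (by omega), pp_0 a (6*q+3+3) (by omega)]; ring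
        · rw [pp_2 a (2*(6*q+4+3)) (2*q+2) (by omega), pp_0 a (6*q+4+2) (by omega),
              pp_5 a (6*q+4+1) q (by omega), pp_1 a (6*q+4+3) (q+1) (by omega),
              pp_2 a (6*q+4+4) (q+1) (by omega)]
          ring
        · rw [pp_4 a (2*(6*q+5+3)) (2*q+2) (by omega), pp_1 a (6*q+5+2) (q+1) (by omega),
              pp_2 a (6*q+5+3) (q+1) (by omega), pp_4 a (6*q+5+5) (q+1) (by omega),
              pp_0 a (6*q+5+1) (by omega)]
          ring
      · obtain ⟨M, hM⟩ : ∃ M, k + 5 = 2*(M+2)+1 := by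
          obtain ⟨t, ht⟩ := ho; exact ⟨t - 2, by omega⟩
        rw [hM, preNormEDS'_odd]
        rw [ih (M+1) (by omega), ih (M+2) (by omega), ih (M+3) (by omega),
            ih (M+4) (by omega)]
        obtain ⟨q, r, hr, hm⟩ : ∃ q r, r < 6 ∧ M = 6*q+r := ⟨M/6, M%6, by omega, by omega⟩
        subst hm
        interval_cases r
        · have hev : Even (6*q+0) := by rw [Nat.even_iff]; omega
          rw [if_pos hev, if_pos hev,
              pp_5 a (2*(6*q+0+2)+1) (2*q) (by omega), pp_4 a (6*q+0+4) q (by omega),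
              pp_2 a (6*q+0+2) q (by omega), pp_1 a (6*q+0+1) q (by omega),
              pp_0 a (6*q+0+3) (by omega)]
          ring
        · have hodd : ¬ Even (6*q+1) := by rw [Nat.even_iff]; omega
          rw [if_neg hodd, if_neg hodd,
              pp_1 a (2*(6*q+1+2)+1) (2*q+1) (by omega), pp_5 a (6*q+1+4) q (by omega),
              pp_0 a (6*q+1+2) (by omega), pp_2 a (6*q+1+1) q (by omega),
              pp_4 a (6*q+1+3) q (by omega)]
          ring
        · have hev : Even (6*q+2) := by rw [Nat.even_iff]; omega
          rw [if_pos hev, if_pos hev,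
              pp_0 a (2*(6*q+2+2)+1) (by omega), pp_0 a (6*q+2+4) (by omega),
              pp_0 a (6*q+2+1) (by omega)]
          ring
        · have hodd : ¬ Even (6*q+3) := by rw [Nat.even_iff]; omega
          rw [if_neg hodd, if_neg hodd,
              pp_5 a (2*(6*q+3+2)+1) (2*q+1) (by omega), pp_1 a (6*q+3+4) (q+1) (by omega),
              pp_5 a (6*q+3+2) q (by omega), pp_4 a (6*q+3+1) q (by omega),
              pp_0 a (6*q+3+3) (by omega)]
          ring
        · have hev : Even (6*q+4) := by rw [Nat.even_iff]; omega
          rw [if_pos hev, if_pos hev,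
              pp_1 a (2*(6*q+4+2)+1) (2*q+2) (by omega), pp_2 a (6*q+4+4) (q+1) (by omega),
              pp_0 a (6*q+4+2) (by omega), pp_5 a (6*q+4+1) q (by omega),
              pp_1 a (6*q+4+3) (q+1) (by omega)]
          ring
        · have hodd : ¬ Even (6*q+5) := by rw [Nat.even_iff]; omega
          rw [if_neg hodd, if_neg hodd,
              pp_0 a (2*(6*q+5+2)+1) (by omega), pp_0 a (6*q+5+4) (by omega),
              pp_0 a (6*q+5+1) (by omega)]
          ring

lemma E3_psi2_eval (a₁ a₃ : ℚ) : evalEval 0 0 (E3 a₁ a₃).ψ₂ = a₃ := by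
  simp [WeierstrassCurve.ψ₂, WeierstrassCurve.Affine.polynomialY, E3, evalEval]

lemma E3_Psi3_eval (a₁ a₃ : ℚ) : ((E3 a₁ a₃).Ψ₃).eval 0 = 0 := by
  simp [WeierstrassCurve.Ψ₃, WeierstrassCurve.b₂, WeierstrassCurve.b₄, WeierstrassCurve.b₆,
    WeierstrassCurve.b₈, E3]

lemma E3_prePsi4_eval (a₁ a₃ : ℚ) : ((E3 a₁ a₃).preΨ₄).eval 0 = -a₃^4 := by
  simp [WeierstrassCurve.preΨ₄, WeierstrassCurve.b₂, WeierstrassCurve.b₄, WeierstrassCurve.b₆,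
    WeierstrassCurve.b₈, E3]
  ring

lemma E3_psi_eval (a₁ a₃ : ℚ) (k : ℕ) :
    evalEval 0 0 ((E3 a₁ a₃).ψ (k : ℤ)) = pp a₃ k * (if Even k then a₃ else 1) := by
  have : evalEval 0 0 ((E3 a₁ a₃).ψ (k : ℤ)) =
      (evalEvalRingHom (0:ℚ) 0) (normEDS (E3 a₁ a₃).ψ₂ (C (E3 a₁ a₃).Ψ₃)
        (C (E3 a₁ a₃).preΨ₄) (k : ℤ)) := rfl
  rw [this, map_normEDS]
  simp only [coe_evalEvalRingHom]
  rw [E3_psi2_eval, evalEval_C, evalEval_C, E3_Psi3_eval, E3_prePsi4_eval, normEDS_ofNat, key]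

lemma E3_phi_eval (a₁ a₃ : ℚ) (k : ℕ) (hk : 1 ≤ k) :
    evalEval 0 0 ((E3 a₁ a₃).φ (k : ℤ)) =
      -(pp a₃ (k+1) * (if Even (k+1) then a₃ else 1) *
        (pp a₃ (k-1) * (if Even (k-1) then a₃ else 1))) := by
  have h1 : ((k:ℤ)+1) = ((k+1 : ℕ) : ℤ) := by push_cast; ring
  have h2 : ((k:ℤ)-1) = ((k-1 : ℕ) : ℤ) := by
    have := Nat.cast_sub (R := ℤ) hk; omega
  rw [WeierstrassCurve.φ, h1, h2]
  rw [evalEval_sub, evalEval_mul, evalEval_mul, evalEval_pow, evalEval_C, eval_X,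
    E3_psi_eval, E3_psi_eval, E3_psi_eval]
  ring

/-- For the curve `E₃ : y² + a₁xy + a₃y = x³` with `a₃ ≠ 0` and torsion point
`P = (0, 0)` of order `3`, the numerator `Gₙ = φₙ(P)` of the `x`-coordinate of
`[n]P` satisfies `Gₙ = 0` if `n ≡ 1, 2 (mod 3)` and `Gₙ = a₃ ^ (2n²/3)` if
`n ≡ 0 (mod 3)`. -/
theorem stmt_14 (a₁ a₃ : ℚ) (ha : a₃ ≠ 0) (h : (E3 a₁ a₃).Nonsingular 0 0)
    (horder : addOrderOf (WeierstrassCurve.Affine.Point.some 0 0 h) = 3) (n : ℕ) :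
    (n % 3 = 1 ∨ n % 3 = 2 → evalEval 0 0 ((E3 a₁ a₃).φ (n : ℤ)) = 0) ∧
    (n % 3 = 0 → evalEval 0 0 ((E3 a₁ a₃).φ (n : ℤ)) = a₃ ^ (2 * n ^ 2 / 3)) := by
  constructor
  · rintro (hm | hm)
    · rw [E3_phi_eval a₁ a₃ n (by omega), pp_0 a₃ (n-1) (by omega)]
      ring
    · rw [E3_phi_eval a₁ a₃ n (by omega), pp_0 a₃ (n+1) (by omega)]
      ring
  · intro hm
    rcases Nat.eq_zero_or_pos n with hn0 | hn1
    · subst hn0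
      show evalEval 0 0 ((E3 a₁ a₃).φ 0) = _
      rw [WeierstrassCurve.φ_zero]
      simp
    · obtain ⟨t, ht⟩ : ∃ t, n = 6*t+6 ∨ n = 6*t+3 := ⟨(n-3)/6, by omega⟩
      rcases ht with ht | ht
      · have hodd1 : ¬ Even (n+1) := by rw [Nat.even_iff]; omega
        have hodd2 : ¬ Even (n-1) := by rw [Nat.even_iff]; omega
        rw [E3_phi_eval a₁ a₃ n (by omega), if_neg hodd1, if_neg hodd2,
          pp_1 a₃ (n+1) (t+1) (by omega), pp_5 a₃ (n-1) t (by omega)]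
        have he : 2 * n ^ 2 / 3 = 24*t^2+48*t+24 := by
          have h3 : 2 * n ^ 2 = 3 * (24*t^2+48*t+24) := by subst ht; ring
          rw [h3, Nat.mul_div_cancel_left _ (by norm_num)]
        rw [he]
        ring
      · have hev1 : Even (n+1) := by rw [Nat.even_iff]; omega
        have hev2 : Even (n-1) := by rw [Nat.even_iff]; omega
        rw [E3_phi_eval a₁ a₃ n (by omega), if_pos hev1, if_pos hev2,
          pp_4 a₃ (n+1) t (by omega), pp_2 a₃ (n-1) t (by omega)]
        have he : 2 * n ^ 2 / 3 = 24*t^2+24*t+6 := by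
          have h3 : 2 * n ^ 2 = 3 * (24*t^2+24*t+6) := by subst ht; ring
          rw [h3, Nat.mul_div_cancel_left _ (by norm_num)]
        rw [he]
        ring
end

section
/- For the Tate normal curve E₅ : y² + (1−α)xy − αy = x³ − αx² with parameter α ≠ 0 and P = (0,0) of order 5, the numerator G_n of the x-coordinate of [n]P satisfies: G_n = 0 if n ≡ 1, 4 (mod 5); G_n = α^{(4n²)/5} if n ≡ 0 (mod 5); and G_n = α^{(4n²−1)/5} if n ≡ 2, 3 (mod 5). -/
open Polynomial
open scoped Polynomial.Bivariate

/-- The Tate normal form `E₅ : y² + (1-α)xy - αy = x³ - αx²` with parameter `α`. -/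
def E5 (α : ℚ) : WeierstrassCurve.Affine ℚ :=
  { a₁ := 1 - α, a₂ := -α, a₃ := -α, a₄ := 0, a₆ := 0 }


noncomputable def fE (α : ℚ) (n : ℕ) : ℚ :=
  if n % 5 = 0 then 0
  else if n % 5 = 1 then (-1)^(n/5) * α^(10*(n/5)^2+4*(n/5))
  else if n % 5 = 2 then -((-1)^(n/5) * α^(10*(n/5)^2+8*(n/5)+1))
  else if n % 5 = 3 then -((-1)^(n/5) * α^(10*(n/5)^2+12*(n/5)+3))
  else (-1)^(n/5) * α^(10*(n/5)^2+16*(n/5)+6)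

lemma fE0 (α : ℚ) (q : ℕ) : fE α (5*q) = 0 := by
  rw [fE, if_pos (by omega)]
lemma fE1 (α : ℚ) (q : ℕ) : fE α (5*q+1) = (-1)^q * α^(10*q^2+4*q) := by
  rw [fE, if_neg (by omega), if_pos (by omega), show (5*q+1)/5 = q by omega]
lemma fE2 (α : ℚ) (q : ℕ) : fE α (5*q+2) = -((-1)^q * α^(10*q^2+8*q+1)) := by
  rw [fE, if_neg (by omega), if_neg (by omega), if_pos (by omega), show (5*q+2)/5 = q by omega]
lemma fE3 (α : ℚ) (q : ℕ) : fE α (5*q+3) = -((-1)^q * α^(10*q^2+12*q+3)) := by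
  rw [fE, if_neg (by omega), if_neg (by omega), if_neg (by omega), if_pos (by omega),
    show (5*q+3)/5 = q by omega]
lemma fE4 (α : ℚ) (q : ℕ) : fE α (5*q+4) = (-1)^q * α^(10*q^2+16*q+6) := by
  rw [fE, if_neg (by omega), if_neg (by omega), if_neg (by omega), if_neg (by omega),
    show (5*q+4)/5 = q by omega]

lemma key_s18 (α : ℚ) (hα : α ≠ 0) (n : ℕ) :
    normEDS (-α) (-α^3) (-α^5) (n : ℤ) = fE α n := by
  induction n using Nat.strong_induction_on with
  | _ n ih =>
  obtain ⟨m, rfl | rfl⟩ := Nat.even_or_odd' n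
  · rcases m with _ | _ | _ | m
    · simpa using (fE0 α 0).symm
    · simpa using (normEDS_two (-α) (-α^3) (-α^5)).trans (by rw [show (2:ℕ) = 5*0+2 by norm_num, fE2]; ring)
    · simpa using (normEDS_four (-α) (-α^3) (-α^5)).trans (by rw [show (4:ℕ) = 5*0+4 by norm_num, fE4]; ring)
    · have hrec : normEDS (-α) (-α^3) (-α^5) (2*((m:ℤ)+3)) * (-α) =
          normEDS (-α) (-α^3) (-α^5) ((m:ℤ)+2) ^ 2 * normEDS (-α) (-α^3) (-α^5) ((m:ℤ)+3) *
            normEDS (-α) (-α^3) (-α^5) ((m:ℤ)+5) -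
          normEDS (-α) (-α^3) (-α^5) ((m:ℤ)+1) * normEDS (-α) (-α^3) (-α^5) ((m:ℤ)+3) *
            normEDS (-α) (-α^3) (-α^5) ((m:ℤ)+4) ^ 2 := by
        have := normEDS_even (-α) (-α^3) (-α^5) ((m:ℤ)+3)
        rw [show (m:ℤ)+3-1 = m+2 by ring, show (m:ℤ)+3+2 = m+5 by ring,
          show (m:ℤ)+3-2 = m+1 by ring, show (m:ℤ)+3+1 = m+4 by ring] at this
        exact this
      have H1 := ih (m+1) (by omega); have H2 := ih (m+2) (by omega)
      have H3 := ih (m+3) (by omega); have H4 := ih (m+4) (by omega)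
      have H5 := ih (m+5) (by omega)
      push_cast at H1 H2 H3 H4 H5 hrec ⊢
      rw [H1, H2, H3, H4, H5] at hrec
      rw [show 2*((m:ℤ)+1+1+1) = 2*((m:ℤ)+3) by ring, show 2*(m+1+1+1) = 2*(m+3) by ring]
      apply mul_right_cancel₀ (neg_ne_zero.mpr hα)
      rw [hrec]
      obtain ⟨k, r, hr5, rfl⟩ : ∃ k r, r < 5 ∧ m = 5*k + r := ⟨m/5, m%5, by omega, by omega⟩
      interval_cases r
      · rw [show 2*(5*k+0+3) = 5*(2*k+1)+1 by ring,
          show 5*k+0+1 = 5*k+1 by ring, show 5*k+0+2 = 5*k+2 by ring,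
          show 5*k+0+3 = 5*k+3 by ring, show 5*k+0+4 = 5*k+4 by ring,
          show 5*k+0+5 = 5*(k+1) by ring, fE1, fE2, fE3, fE4, fE0, fE1]
        rcases neg_one_pow_eq_or ℚ k with hk | hk <;>
          simp only [pow_add, pow_mul, neg_one_sq, one_pow, pow_one, hk] <;> ring
      · rw [show 2*(5*k+1+3) = 5*(2*k+1)+3 by ring,
          show 5*k+1+1 = 5*k+2 by ring, show 5*k+1+2 = 5*k+3 by ring,
          show 5*k+1+3 = 5*k+4 by ring, show 5*k+1+4 = 5*(k+1) by ring,
          show 5*k+1+5 = 5*(k+1)+1 by ring, fE2, fE3, fE4, fE0, fE1, fE3]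
        rcases neg_one_pow_eq_or ℚ k with hk | hk <;>
          simp only [pow_add, pow_mul, neg_one_sq, one_pow, pow_one, hk] <;> ring
      · rw [show 2*(5*k+2+3) = 5*(2*k+2) by ring,
          show 5*k+2+1 = 5*k+3 by ring, show 5*k+2+2 = 5*k+4 by ring,
          show 5*k+2+3 = 5*(k+1) by ring, show 5*k+2+4 = 5*(k+1)+1 by ring,
          show 5*k+2+5 = 5*(k+1)+2 by ring, fE3, fE4, fE0, fE1, fE2, fE0]
        rcases neg_one_pow_eq_or ℚ k with hk | hk <;>
          simp only [pow_add, pow_mul, neg_one_sq, one_pow, pow_one, hk] <;> ring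
      · rw [show 2*(5*k+3+3) = 5*(2*k+2)+2 by ring,
          show 5*k+3+1 = 5*k+4 by ring, show 5*k+3+2 = 5*(k+1) by ring,
          show 5*k+3+3 = 5*(k+1)+1 by ring, show 5*k+3+4 = 5*(k+1)+2 by ring,
          show 5*k+3+5 = 5*(k+1)+3 by ring, fE4, fE0, fE1, fE2, fE3, fE2]
        rcases neg_one_pow_eq_or ℚ k with hk | hk <;>
          simp only [pow_add, pow_mul, neg_one_sq, one_pow, pow_one, hk] <;> ring
      · rw [show 2*(5*k+4+3) = 5*(2*k+2)+4 by ring,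
          show 5*k+4+1 = 5*(k+1) by ring, show 5*k+4+2 = 5*(k+1)+1 by ring,
          show 5*k+4+3 = 5*(k+1)+2 by ring, show 5*k+4+4 = 5*(k+1)+3 by ring,
          show 5*k+4+5 = 5*(k+1)+4 by ring, fE0, fE1, fE2, fE3, fE4, fE4]
        rcases neg_one_pow_eq_or ℚ k with hk | hk <;>
          simp only [pow_add, pow_mul, neg_one_sq, one_pow, pow_one, hk] <;> ring
  · rcases m with _ | _ | m
    · simpa using (normEDS_one (-α) (-α^3) (-α^5)).trans (by rw [show (1:ℕ) = 5*0+1 by norm_num, fE1]; ring)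
    · simpa using (normEDS_three (-α) (-α^3) (-α^5)).trans (by rw [show (3:ℕ) = 5*0+3 by norm_num, fE3]; ring)
    · have hrec : normEDS (-α) (-α^3) (-α^5) (2*((m:ℤ)+2)+1) =
          normEDS (-α) (-α^3) (-α^5) ((m:ℤ)+4) * normEDS (-α) (-α^3) (-α^5) ((m:ℤ)+2) ^ 3 -
          normEDS (-α) (-α^3) (-α^5) ((m:ℤ)+1) * normEDS (-α) (-α^3) (-α^5) ((m:ℤ)+3) ^ 3 := by
        have := normEDS_odd (-α) (-α^3) (-α^5) ((m:ℤ)+2)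
        rw [show (m:ℤ)+2+2 = m+4 by ring, show (m:ℤ)+2-1 = m+1 by ring,
          show (m:ℤ)+2+1 = m+3 by ring] at this
        exact this
      have H1 := ih (m+1) (by omega); have H2 := ih (m+2) (by omega)
      have H3 := ih (m+3) (by omega); have H4 := ih (m+4) (by omega)
      push_cast at H1 H2 H3 H4 hrec ⊢
      rw [H1, H2, H3, H4] at hrec
      rw [show 2*((m:ℤ)+1+1) = 2*((m:ℤ)+2) by ring, show 2*(m+1+1)+1 = 2*(m+2)+1 by ring, hrec]
      obtain ⟨k, r, hr5, rfl⟩ : ∃ k r, r < 5 ∧ m = 5*k + r := ⟨m/5, m%5, by omega, by omega⟩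
      interval_cases r
      · rw [show 2*(5*k+0+2)+1 = 5*(2*k+1) by ring,
          show 5*k+0+1 = 5*k+1 by ring, show 5*k+0+2 = 5*k+2 by ring,
          show 5*k+0+3 = 5*k+3 by ring, show 5*k+0+4 = 5*k+4 by ring,
          fE1, fE2, fE3, fE4, fE0]
        rcases neg_one_pow_eq_or ℚ k with hk | hk <;>
          simp only [pow_add, pow_mul, neg_one_sq, one_pow, pow_one, hk] <;> ring
      · rw [show 2*(5*k+1+2)+1 = 5*(2*k+1)+2 by ring,
          show 5*k+1+1 = 5*k+2 by ring, show 5*k+1+2 = 5*k+3 by ring,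
          show 5*k+1+3 = 5*k+4 by ring, show 5*k+1+4 = 5*(k+1) by ring,
          fE2, fE3, fE4, fE0, fE2]
        rcases neg_one_pow_eq_or ℚ k with hk | hk <;>
          simp only [pow_add, pow_mul, neg_one_sq, one_pow, pow_one, hk] <;> ring
      · rw [show 2*(5*k+2+2)+1 = 5*(2*k+1)+4 by ring,
          show 5*k+2+1 = 5*k+3 by ring, show 5*k+2+2 = 5*k+4 by ring,
          show 5*k+2+3 = 5*(k+1) by ring, show 5*k+2+4 = 5*(k+1)+1 by ring,
          fE3, fE4, fE0, fE1, fE4]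
        rcases neg_one_pow_eq_or ℚ k with hk | hk <;>
          simp only [pow_add, pow_mul, neg_one_sq, one_pow, pow_one, hk] <;> ring
      · rw [show 2*(5*k+3+2)+1 = 5*(2*k+2)+1 by ring,
          show 5*k+3+1 = 5*k+4 by ring, show 5*k+3+2 = 5*(k+1) by ring,
          show 5*k+3+3 = 5*(k+1)+1 by ring, show 5*k+3+4 = 5*(k+1)+2 by ring,
          fE4, fE0, fE1, fE2, fE1]
        rcases neg_one_pow_eq_or ℚ k with hk | hk <;>
          simp only [pow_add, pow_mul, neg_one_sq, one_pow, pow_one, hk] <;> ring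
      · rw [show 2*(5*k+4+2)+1 = 5*(2*k+2)+3 by ring,
          show 5*k+4+1 = 5*(k+1) by ring, show 5*k+4+2 = 5*(k+1)+1 by ring,
          show 5*k+4+3 = 5*(k+1)+2 by ring, show 5*k+4+4 = 5*(k+1)+3 by ring,
          fE0, fE1, fE2, fE3, fE3]
        rcases neg_one_pow_eq_or ℚ k with hk | hk <;>
          simp only [pow_add, pow_mul, neg_one_sq, one_pow, pow_one, hk] <;> ring

lemma psi_eval (α : ℚ) (hα : α ≠ 0) (n : ℤ) :
    evalEval 0 0 ((E5 α).ψ n) = normEDS (-α) (-α^3) (-α^5) n := by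
  have h2 : evalEval 0 0 ((E5 α).ψ₂) = -α := by
    simp [WeierstrassCurve.ψ₂, E5, WeierstrassCurve.Affine.evalEval_polynomialY_zero]
  have h3 : ((E5 α).Ψ₃).eval 0 = -α^3 := by
    simp [WeierstrassCurve.Ψ₃, WeierstrassCurve.b₈, E5]; ring
  have h4 : ((E5 α).preΨ₄).eval 0 = -α^5 := by
    simp [WeierstrassCurve.preΨ₄, WeierstrassCurve.b₈, WeierstrassCurve.b₆,
      WeierstrassCurve.b₄, E5]; ring
  rw [WeierstrassCurve.ψ, show (evalEval (0:ℚ) 0 : ℚ[X][Y] → ℚ) = evalEvalRingHom 0 0 from rfl,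
    map_normEDS,
    show (evalEvalRingHom (0:ℚ) 0) ((E5 α).ψ₂) = -α from h2,
    show (evalEvalRingHom (0:ℚ) 0) (C ((E5 α).Ψ₃)) = -α^3 from (evalEval_C _ _ _).trans h3,
    show (evalEvalRingHom (0:ℚ) 0) (C ((E5 α).preΨ₄)) = -α^5 from (evalEval_C _ _ _).trans h4]

lemma G_eq (α : ℚ) (hα : α ≠ 0) (n : ℕ) (hn : 1 ≤ n) :
    evalEval 0 0 ((E5 α).φ (n : ℤ)) = -(fE α (n+1) * fE α (n-1)) := by
  rw [WeierstrassCurve.φ]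
  have h1 : ((n:ℤ)+1) = ((n+1 : ℕ) : ℤ) := by push_cast; ring
  have h2 : ((n:ℤ)-1) = ((n-1 : ℕ) : ℤ) := by
    have : (((n-1 : ℕ)) : ℤ) = (n : ℤ) - 1 := by
      rw [Nat.cast_sub hn]; norm_num
    omega
  rw [h1, h2, evalEval_sub, evalEval_mul, evalEval_mul, evalEval_C, eval_X,
    psi_eval α hα, psi_eval α hα, key_s18 α hα, key_s18 α hα]
  ring

/-- For the Tate normal curve `E₅` with `α ≠ 0` and torsion point `P = (0, 0)`
of order `5`, the numerator `Gₙ = φₙ(P)` of the `x`-coordinate of `[n]P`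
satisfies `Gₙ = 0` if `n ≡ 1, 4 (mod 5)`, `Gₙ = α ^ (4n²/5)` if `n ≡ 0 (mod 5)`,
and `Gₙ = α ^ ((4n²-1)/5)` if `n ≡ 2, 3 (mod 5)`. -/
theorem stmt_18 (α : ℚ) (hα : α ≠ 0) (h : (E5 α).Nonsingular 0 0)
    (horder : addOrderOf (WeierstrassCurve.Affine.Point.some 0 0 h) = 5) (n : ℕ) :
    (n % 5 = 1 ∨ n % 5 = 4 → evalEval 0 0 ((E5 α).φ (n : ℤ)) = 0) ∧
    (n % 5 = 0 → evalEval 0 0 ((E5 α).φ (n : ℤ)) = α ^ (4 * n ^ 2 / 5)) ∧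
    (n % 5 = 2 ∨ n % 5 = 3 → evalEval 0 0 ((E5 α).φ (n : ℤ)) = α ^ ((4 * n ^ 2 - 1) / 5)) := by
  refine ⟨?_, ?_, ?_⟩
  · rintro (h1 | h4)
    · obtain ⟨k, rfl⟩ : ∃ k, n = 5*k+1 := ⟨n/5, by omega⟩
      rw [G_eq α hα _ (by omega), show 5*k+1-1 = 5*k by omega, fE0]
      ring
    · obtain ⟨k, rfl⟩ : ∃ k, n = 5*k+4 := ⟨n/5, by omega⟩
      rw [G_eq α hα _ (by omega), show 5*k+4+1 = 5*(k+1) by ring, fE0]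
      ring
  · intro h0
    rcases Nat.eq_zero_or_pos n with rfl | hn
    · simp [WeierstrassCurve.φ_zero]
    · obtain ⟨j, rfl⟩ : ∃ j, n = 5*j+5 := ⟨n/5-1, by omega⟩
      rw [G_eq α hα _ (by omega), show 5*j+5+1 = 5*(j+1)+1 by ring,
        show 5*j+5-1 = 5*j+4 by omega, fE1, fE4,
        show 4*(5*j+5)^2/5 = 20*(j+1)^2 by
          rw [show 4*(5*j+5)^2 = 20*(j+1)^2*5 by ring, Nat.mul_div_cancel _ (by norm_num)]]
      rcases neg_one_pow_eq_or ℚ j with hj | hj <;>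
        simp only [pow_add, pow_mul, neg_one_sq, one_pow, pow_one, hj] <;> ring
  · rintro (h2 | h3)
    · obtain ⟨k, rfl⟩ : ∃ k, n = 5*k+2 := ⟨n/5, by omega⟩
      rw [G_eq α hα _ (by omega), show 5*k+2+1 = 5*k+3 by ring,
        show 5*k+2-1 = 5*k+1 by omega, fE3, fE1,
        show (4*(5*k+2)^2-1)/5 = 20*k^2+16*k+3 by
          rw [show 4*(5*k+2)^2-1 = (20*k^2+16*k+3)*5 by ring_nf; omega,
            Nat.mul_div_cancel _ (by norm_num)]]
      rcases neg_one_pow_eq_or ℚ k with hk | hk <;>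
        simp only [pow_add, pow_mul, neg_one_sq, one_pow, pow_one, hk] <;> ring
    · obtain ⟨k, rfl⟩ : ∃ k, n = 5*k+3 := ⟨n/5, by omega⟩
      rw [G_eq α hα _ (by omega), show 5*k+3+1 = 5*k+4 by ring,
        show 5*k+3-1 = 5*k+2 by omega, fE4, fE2,
        show (4*(5*k+3)^2-1)/5 = 20*k^2+24*k+7 by
          rw [show 4*(5*k+3)^2-1 = (20*k^2+24*k+7)*5 by ring_nf; omega,
            Nat.mul_div_cancel _ (by norm_num)]]
      rcases neg_one_pow_eq_or ℚ k with hk | hk <;>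
        simp only [pow_add, pow_mul, neg_one_sq, one_pow, pow_one, hk] <;> ring
end
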